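/- arXiv:2008.00185 — 5 statements merged into one kernel-verified Lean document; each statement's English description precedes it below -/
import Mathlib

section
/- For every p in (1,∞), the integral of (1-s^p)^{-1/p} over s ∈ [-1,1] equals 2π/(p·sin(π/p)). -/
open Real MeasureTheory intervalIntegral Set

/-- The real Beta integrand agrees with the complex one on `[0,1]`. -/
lemma beta_integrand_cast {u v : ℝ} (x : ℝ) (hx0 : 0 ≤ x) (hx1 : x ≤ 1) :
    ((x ^ (u - 1) * (1 - x) ^ (v - 1) : ℝ) : ℂ)
      = (x : ℂ) ^ ((u : ℂ) - 1) * ((1 : ℂ) - x) ^ ((v : ℂ) - 1) := by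
  have h1 : ((x ^ (u - 1) : ℝ) : ℂ) = (x : ℂ) ^ ((u : ℂ) - 1) := by
    rw [Complex.ofReal_cpow hx0, Complex.ofReal_sub, Complex.ofReal_one]
  have h2 : (((1 - x) ^ (v - 1) : ℝ) : ℂ) = ((1 : ℂ) - x) ^ ((v : ℂ) - 1) := by
    rw [Complex.ofReal_cpow (by linarith), Complex.ofReal_sub, Complex.ofReal_sub,
      Complex.ofReal_one]
  rw [Complex.ofReal_mul, h1, h2]

lemma realBeta_integrable {u v : ℝ} (hu : 0 < u) (hv : 0 < v) :
    IntervalIntegrable (fun x => x ^ (u - 1) * (1 - x) ^ (v - 1)) volume 0 1 := by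
  have h := Complex.betaIntegral_convergent (u := u) (v := v) (by simpa) (by simpa)
  rw [intervalIntegrable_iff, uIoc_of_le (zero_le_one)] at h ⊢
  have hre : IntegrableOn
      (fun x : ℝ => ((x : ℂ) ^ ((u : ℂ) - 1) * ((1 : ℂ) - x) ^ ((v : ℂ) - 1)).re)
      (Ioc (0:ℝ) 1) volume := h.re
  refine hre.congr_fun (fun x hx => ?_) measurableSet_Ioc
  have := beta_integrand_cast (u := u) (v := v) x hx.1.le hx.2
  beta_reduce
  rw [← this, Complex.ofReal_re]

lemma realBeta_eq {u v : ℝ} (hu : 0 < u) (hv : 0 < v) (huv : u + v = 1) :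
    ∫ x in (0:ℝ)..1, x ^ (u - 1) * (1 - x) ^ (v - 1) = π / Real.sin (π * u) := by
  have hB := Complex.Gamma_mul_Gamma_eq_betaIntegral (s := u) (t := v)
    (by simpa) (by simpa)
  have huv' : (u : ℂ) + v = 1 := by exact_mod_cast huv
  rw [huv', Complex.Gamma_one, one_mul] at hB
  have hcast : Complex.betaIntegral u v
      = ((∫ x in (0:ℝ)..1, x ^ (u - 1) * (1 - x) ^ (v - 1) : ℝ) : ℂ) := by
    rw [Complex.betaIntegral, ← intervalIntegral.integral_ofReal]
    refine intervalIntegral.integral_congr (fun x hx => ?_)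
    rw [uIcc_of_le zero_le_one] at hx
    exact (beta_integrand_cast x hx.1 hx.2).symm
  rw [hcast, Complex.Gamma_ofReal, Complex.Gamma_ofReal, ← Complex.ofReal_mul] at hB
  have := Complex.ofReal_inj.mp hB.symm
  rw [this]
  have : v = 1 - u := by linarith
  rw [this, Real.Gamma_mul_Gamma_one_sub]

lemma integrand_integrable (p : ℝ) (hp : 1 < p) :
    IntervalIntegrable (fun s : ℝ => (1 - s ^ p) ^ (-(1:ℝ)/p)) volume 0 1 := by
  have hp0 : (0:ℝ) < p := by linarith
  have hne : -(1:ℝ)/p ≠ 0 := by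
    rw [neg_div, neg_ne_zero]; positivity
  have hmaj : IntervalIntegrable (fun s : ℝ => (1 - s) ^ (-(1:ℝ)/p)) volume 0 1 := by
    have h := intervalIntegrable_rpow' (a := 0) (b := 1) (r := -(1:ℝ)/p)
      (by rw [neg_div]; rw [neg_lt_neg_iff]; rw [div_lt_one (by linarith)]; linarith)
    have h2 := h.comp_sub_left 1
    simpa using h2.symm
  refine hmaj.mono_fun ?_ ?_
  · -- a.e. strong measurability via continuity on `Ioo 0 1`
    have hcont : ContinuousOn (fun s : ℝ => (1 - s ^ p) ^ (-(1:ℝ)/p)) (Ioo (0:ℝ) 1) := by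
      intro x hx
      refine ContinuousWithinAt.rpow_const ?_ (Or.inl ?_)
      · exact (continuous_const.sub (continuous_iff_continuousAt.mpr fun y =>
          Real.continuousAt_rpow_const y p (Or.inr hp0.le))).continuousWithinAt
      · have : x ^ p < 1 := Real.rpow_lt_one hx.1.le hx.2 hp0
        intro h; rw [sub_eq_zero] at h; linarith
    have h := hcont.aestronglyMeasurable (μ := volume) measurableSet_Ioo
    rw [Measure.restrict_congr_set Ioo_ae_eq_Ioc] at h
    rwa [uIoc_of_le zero_le_one]
  · rw [Filter.EventuallyLE, ae_restrict_iff' measurableSet_uIoc]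
    refine Filter.Eventually.of_forall (fun x hx => ?_)
    rw [uIoc_of_le zero_le_one] at hx
    obtain ⟨hx0, hx1⟩ := hx
    have hxp : x ^ p ≤ x := by
      calc x ^ p ≤ x ^ (1:ℝ) := Real.rpow_le_rpow_of_exponent_ge hx0 hx1 hp.le
        _ = x := Real.rpow_one x
    have h1 : (0:ℝ) ≤ 1 - x ^ p := by
      have : x ^ p ≤ 1 := hxp.trans hx1
      linarith
    have h2 : (1:ℝ) - x ≤ 1 - x ^ p := by linarith
    rcases eq_or_lt_of_le hx1 with h | h
    · subst h
      simp [Real.one_rpow, sub_self, Real.zero_rpow hne]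
    · have hpos : (0:ℝ) < 1 - x := by linarith
      rw [Real.norm_eq_abs, Real.norm_eq_abs, abs_of_nonneg (Real.rpow_nonneg h1 _),
        abs_of_nonneg (Real.rpow_nonneg hpos.le _)]
      exact Real.rpow_le_rpow_of_nonpos hpos h2 (by
        rw [neg_div]; exact neg_nonpos.mpr (by positivity))

/-- Pointwise change-of-variables identity on `(0,1]`. -/
lemma pointwise_subst {p : ℝ} (hp : 1 < p) {x : ℝ} (hx0 : 0 < x) :
    (1 - x ^ p) ^ (-(1:ℝ)/p)
      = (p * x ^ (p-1)) • ((1/p) * ((x ^ p) ^ ((1/p) - 1) * (1 - x ^ p) ^ ((1 - 1/p) - 1))) := by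
  have hp0 : (0:ℝ) < p := by linarith
  simp only [smul_eq_mul]
  have hxp : (x ^ p) ^ ((1:ℝ)/p - 1) = x ^ (1 - p) := by
    rw [← Real.rpow_mul hx0.le]
    congr 1
    field_simp
  rw [hxp]
  have hexp : ((1:ℝ) - 1/p) - 1 = -(1:ℝ)/p := by field_simp; ring
  rw [hexp]
  have hx2 : x ^ (p-1) * x ^ ((1:ℝ)-p) = 1 := by
    rw [← Real.rpow_add hx0]; norm_num
  field_simp
  rw [mul_assoc, hx2, mul_one]

/-- For every `p ∈ (1,∞)`, `π_p := ∫_{-1}^{1} (1-|s|^p)^{-1/p} ds = 2π/(p·sin(π/p))`. -/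
theorem pi_p_eq (p : ℝ) (hp : 1 < p) :
    ∫ s in (-1:ℝ)..1, (1 - |s| ^ p) ^ (-(1:ℝ)/p) = 2 * π / (p * Real.sin (π / p)) := by
  have hp0 : (0:ℝ) < p := by linarith
  have habs : EqOn (fun s : ℝ => (1 - |s| ^ p) ^ (-(1:ℝ)/p))
      (fun s : ℝ => (1 - s ^ p) ^ (-(1:ℝ)/p)) (uIcc (0:ℝ) 1) := by
    intro x hx
    rw [uIcc_of_le zero_le_one] at hx
    simp [abs_of_nonneg hx.1]
  have hI : IntervalIntegrable (fun s : ℝ => (1 - |s| ^ p) ^ (-(1:ℝ)/p)) volume 0 1 := by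
    rw [intervalIntegrable_iff, uIoc_of_le zero_le_one]
    have := integrand_integrable p hp
    rw [intervalIntegrable_iff, uIoc_of_le zero_le_one] at this
    refine this.congr_fun (fun x hx => ?_) measurableSet_Ioc
    simp [abs_of_nonneg hx.1.le]
  have hneg : IntervalIntegrable (fun s : ℝ => (1 - |s| ^ p) ^ (-(1:ℝ)/p)) volume (-1) 0 := by
    have := hI.comp_sub_left 0
    simpa [abs_neg] using this.symm
  have hsplit : ∫ s in (-1:ℝ)..1, (1 - |s| ^ p) ^ (-(1:ℝ)/p)
      = 2 * ∫ s in (0:ℝ)..1, (1 - s ^ p) ^ (-(1:ℝ)/p) := by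
    rw [← intervalIntegral.integral_add_adjacent_intervals (b := (0:ℝ)) hneg hI]
    have hleft : ∫ s in (-1:ℝ)..0, (1 - |s| ^ p) ^ (-(1:ℝ)/p)
        = ∫ s in (0:ℝ)..1, (1 - |s| ^ p) ^ (-(1:ℝ)/p) := by
      have h := intervalIntegral.integral_comp_neg (a := (-1:ℝ)) (b := 0)
        (f := fun s : ℝ => (1 - |s| ^ p) ^ (-(1:ℝ)/p))
      simp only [abs_neg, neg_zero, neg_neg] at h
      exact h
    rw [hleft, intervalIntegral.integral_congr habs]
    ring
  rw [hsplit]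
  set g : ℝ → ℝ := fun u => (1/p) * (u ^ ((1/p) - 1) * (1 - u) ^ ((1 - 1/p) - 1)) with hg
  have hu0 : (0:ℝ) < 1/p := by positivity
  have hv0 : (0:ℝ) < 1 - 1/p := by
    rw [sub_pos, div_lt_one hp0]; linarith
  have hgint : IntervalIntegrable g volume 0 1 :=
    (realBeta_integrable hu0 hv0).const_mul (1/p)
  have hsub : ∫ x in (0:ℝ)..1, (p * x ^ (p-1)) • g (x ^ p) = ∫ u in (0:ℝ)..1, g u := by
    have key := intervalIntegral.integral_comp_smul_deriv''' (a := (0:ℝ)) (b := 1)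
      (f := fun x => x ^ p) (f' := fun x => p * x ^ (p-1)) (g := g)
      (fun x _ => (Real.continuousAt_rpow_const x p (Or.inr hp0.le)).continuousWithinAt)
      (fun x hx => by
        rw [min_eq_left zero_le_one, max_eq_right zero_le_one] at hx
        exact ((Real.hasDerivAt_rpow_const (Or.inl (ne_of_gt hx.1))).hasDerivWithinAt))
      ?_ ?_ ?_
    · have h0 : (0:ℝ) ^ p = 0 := Real.zero_rpow (ne_of_gt hp0)
      have h1 : (1:ℝ) ^ p = 1 := Real.one_rpow p
      simpa [Function.comp, h0, h1] using key
    · refine ContinuousOn.mono (s := Ioo (0:ℝ) 1) ?_ ?_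
      · refine ContinuousOn.mul continuousOn_const (ContinuousOn.mul ?_ ?_)
        · exact fun x hx => (Real.continuousAt_rpow_const x _
            (Or.inl (ne_of_gt hx.1))).continuousWithinAt
        · refine fun x hx => ContinuousWithinAt.rpow_const ?_ (Or.inl (by
            intro h; rw [sub_eq_zero] at h; exact (ne_of_lt hx.2) h.symm))
          exact (continuous_const.sub continuous_id).continuousWithinAt
      · rintro _ ⟨x, hx, rfl⟩
        rw [min_eq_left zero_le_one, max_eq_right zero_le_one] at hx
        exact ⟨Real.rpow_pos_of_pos hx.1 p, Real.rpow_lt_one hx.1.le hx.2 hp0⟩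
    · have himg : (fun x : ℝ => x ^ p) '' uIcc (0:ℝ) 1 ⊆ Icc (0:ℝ) 1 := by
        rintro _ ⟨x, hx, rfl⟩
        rw [uIcc_of_le zero_le_one] at hx
        exact ⟨Real.rpow_nonneg hx.1 p, Real.rpow_le_one hx.1 hx.2 hp0.le⟩
      refine IntegrableOn.mono_set ?_ himg
      rw [integrableOn_Icc_iff_integrableOn_Ioc]
      rw [intervalIntegrable_iff, uIoc_of_le zero_le_one] at hgint
      exact hgint
    · rw [uIcc_of_le zero_le_one, integrableOn_Icc_iff_integrableOn_Ioc]
      have hii := integrand_integrable p hp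
      rw [intervalIntegrable_iff, uIoc_of_le zero_le_one] at hii
      refine hii.congr_fun (fun x hx => ?_) measurableSet_Ioc
      exact pointwise_subst hp hx.1
  have hbeta : ∫ u in (0:ℝ)..1, g u = (1/p) * (π / Real.sin (π * (1/p))) := by
    rw [hg, intervalIntegral.integral_const_mul, realBeta_eq hu0 hv0 (by ring)]
  have hmain : ∫ s in (0:ℝ)..1, (1 - s ^ p) ^ (-(1:ℝ)/p)
      = (1/p) * (π / Real.sin (π * (1/p))) := by
    rw [← hbeta, ← hsub]
    rw [intervalIntegral.integral_of_le zero_le_one,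
      intervalIntegral.integral_of_le zero_le_one]
    refine setIntegral_congr_fun measurableSet_Ioc (fun x hx => ?_)
    exact pointwise_subst hp hx.1
  rw [hmain]
  have hππ : π * (1/p) = π / p := by ring
  rw [hππ]
  field_simp
end

section
/- On the open interval (-π_p/2, π_p/2), the function sin_p satisfies the ODE (d/dt)(|sin_p'|^{p-2} sin_p') + (p-1)|sin_p|^{p-2} sin_p = 0. -/
open Real Set MeasureTheory intervalIntegral Filter

/-- On `(-π_p/2, π_p/2)` the `p`-sine satisfies
`((|sinp'|^{p-2} sinp')' + (p-1)|sinp|^{p-2} sinp = 0`. -/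
theorem p_sine_ode (p : ℝ) (hp : 1 < p)
    (pip : ℝ) (hpip : pip = ∫ s in (-1:ℝ)..1, (1 - |s| ^ p) ^ (-(1:ℝ)/p))
    (sinp : ℝ → ℝ)
    (hrange : ∀ t ∈ Set.Icc (-(pip/2)) (pip/2), sinp t ∈ Set.Icc (-1:ℝ) 1)
    (hdef : ∀ t ∈ Set.Icc (-(pip/2)) (pip/2),
      t = ∫ s in (0:ℝ)..(sinp t), (1 - |s| ^ p) ^ (-(1:ℝ)/p)) :
    ∀ t ∈ Set.Ioo (-(pip/2)) (pip/2),
      HasDerivAt (fun s => |deriv sinp s| ^ (p-2) * deriv sinp s)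
        (-(p-1) * |sinp t| ^ (p-2) * sinp t) t := by
  have hp0 : (0:ℝ) < p := by linarith
  set r : ℝ := -(1:ℝ)/p with hr_def
  have hrneg : r < 0 := by
    rw [hr_def, neg_div]
    simp only [Left.neg_neg_iff]
    positivity
  have hr1 : (-1:ℝ) < r := by
    rw [hr_def, neg_div]
    have : 1/p < 1 := by rw [div_lt_one hp0]; exact hp
    linarith
  set g : ℝ → ℝ := fun s => (1 - |s| ^ p) ^ r with hg_def
  set F : ℝ → ℝ := fun x => ∫ s in (0:ℝ)..x, g s with hF_def
  have hpip' : pip = ∫ s in (-1:ℝ)..1, g s := hpip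
  have hdef' : ∀ τ ∈ Set.Icc (-(pip/2)) (pip/2), F (sinp τ) = τ :=
    fun τ h => (hdef τ h).symm
  have hFval : ∀ x : ℝ, F x = ∫ s in (0:ℝ)..x, g s := fun _ => rfl
  -- measurability of g
  have hg_meas : Measurable g := by
    apply Measurable.pow _ measurable_const
    exact measurable_const.sub ((measurable_abs).pow measurable_const)
  -- nonnegativity / positivity of g
  have hbase : ∀ s : ℝ, s ∈ Icc (-1:ℝ) 1 → 0 ≤ 1 - |s| ^ p := by
    intro s hs
    have h1 : |s| ≤ 1 := abs_le.2 ⟨hs.1, hs.2⟩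
    have := Real.rpow_le_one (abs_nonneg s) h1 hp0.le
    linarith
  have hbase' : ∀ s : ℝ, s ∈ Ioo (-1:ℝ) 1 → 0 < 1 - |s| ^ p := by
    intro s hs
    have h1 : |s| < 1 := abs_lt.2 ⟨hs.1, hs.2⟩
    have := Real.rpow_lt_one (abs_nonneg s) h1 hp0
    linarith
  have hg_nonneg : ∀ s : ℝ, s ∈ Icc (-1:ℝ) 1 → 0 ≤ g s :=
    fun s hs => Real.rpow_nonneg (hbase s hs) r
  have hg_pos : ∀ s : ℝ, s ∈ Ioo (-1:ℝ) 1 → 0 < g s :=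
    fun s hs => Real.rpow_pos_of_pos (hbase' s hs) r
  -- integrability of g on [-1,1]
  have hIntFull : IntervalIntegrable g volume (-1) 1 := by
    have hH1 : IntervalIntegrable (fun s : ℝ => (1-s) ^ r) volume (-1) 1 := by
      have := (intervalIntegral.intervalIntegrable_rpow' (a := 2) (b := 0) hr1).comp_sub_left 1
      norm_num at this
      exact this
    have hH2 : IntervalIntegrable (fun s : ℝ => (1+s) ^ r) volume (-1) 1 := by
      have := (intervalIntegral.intervalIntegrable_rpow' (a := 0) (b := 2) hr1).comp_add_left 1
      norm_num at this
      exact this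
    refine IntervalIntegrable.mono_fun' (hH1.add hH2) (hg_meas.aestronglyMeasurable.restrict) ?_
    filter_upwards [MeasureTheory.ae_restrict_mem measurableSet_uIoc] with x hx
    rw [Set.uIoc_of_le (by norm_num : (-1:ℝ) ≤ 1)] at hx
    have hx' : x ∈ Icc (-1:ℝ) 1 := ⟨hx.1.le, hx.2⟩
    have hxabs : |x| ≤ 1 := abs_le.2 ⟨hx'.1, hx'.2⟩
    have hA : g x ≤ (1 - |x|) ^ r := by
      rcases eq_or_lt_of_le hxabs with heq | hlt
      · have h2 : |x| ^ p = 1 := by rw [heq, Real.one_rpow]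
        have h3 : g x = 0 := by
          rw [hg_def]; simp only [h2, sub_self, Real.zero_rpow hrneg.ne]
        rw [h3, heq, sub_self, Real.zero_rpow hrneg.ne]
      · have hxp : |x| ^ p ≤ |x| := by
          rcases eq_or_lt_of_le (abs_nonneg x) with h0 | h0
          · rw [← h0, Real.zero_rpow hp0.ne']
          · calc |x| ^ p ≤ |x| ^ (1:ℝ) :=
                  Real.rpow_le_rpow_of_exponent_ge h0 hlt.le hp.le
              _ = |x| := Real.rpow_one _
        exact Real.rpow_le_rpow_of_nonpos (by linarith) (by linarith) hrneg.le
    have hB : (1 - |x|) ^ r ≤ (1-x) ^ r + (1+x) ^ r := by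
      rcases le_or_gt 0 x with hx0 | hx0
      · rw [abs_of_nonneg hx0]
        have : (0:ℝ) ≤ (1+x) ^ r := Real.rpow_nonneg (by linarith) r
        linarith
      · rw [abs_of_neg hx0]
        have h4 : (0:ℝ) ≤ (1-x) ^ r := Real.rpow_nonneg (by linarith) r
        have he : 1 - -x = 1 + x := by ring
        rw [he]
        linarith
    calc ‖g x‖ = g x := Real.norm_of_nonneg (hg_nonneg x hx')
      _ ≤ (1 - |x|) ^ r := hA
      _ ≤ (fun s => (1-s)^r) x + (fun s => (1+s)^r) x := hB
  have hInt : ∀ a ∈ Icc (-1:ℝ) 1, ∀ b ∈ Icc (-1:ℝ) 1,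
      IntervalIntegrable g volume a b := by
    intro a ha b hb
    apply hIntFull.mono_set
    rw [uIcc_subset_uIcc_iff_mem, uIcc_of_le (by norm_num : (-1:ℝ) ≤ 1)]
    exact ⟨ha, hb⟩
  have h0m : (0:ℝ) ∈ Icc (-1:ℝ) 1 := by norm_num
  have h1m : (1:ℝ) ∈ Icc (-1:ℝ) 1 := by norm_num
  have hneg1m : (-1:ℝ) ∈ Icc (-1:ℝ) 1 := by norm_num
  -- F is differentiable with derivative g on the open interval
  have hF_deriv : ∀ x ∈ Ioo (-1:ℝ) 1, HasDerivAt F (g x) x := by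
    intro x hx
    apply intervalIntegral.integral_hasDerivAt_right
      (hInt 0 h0m x (Ioo_subset_Icc_self hx))
      ⟨Set.univ, Filter.univ_mem, hg_meas.aestronglyMeasurable.restrict⟩
    have h1 : ContinuousAt (fun s : ℝ => 1 - |s| ^ p) x := by
      apply ContinuousAt.sub continuousAt_const
      exact ((continuous_abs.rpow_const (fun _ => Or.inr hp0.le))).continuousAt
    have h2 : ContinuousAt (fun u : ℝ => u ^ r) (1 - |x| ^ p) :=
      Real.continuousAt_rpow_const _ _ (Or.inl (hbase' x hx).ne')
    have h3 := ContinuousAt.comp (g := fun u : ℝ => u ^ r)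
      (f := fun s : ℝ => 1 - |s| ^ p) h2 h1
    exact h3
  -- F y - F x = ∫ x..y
  have hFdiff : ∀ x ∈ Icc (-1:ℝ) 1, ∀ y ∈ Icc (-1:ℝ) 1,
      F y - F x = ∫ s in x..y, g s := by
    intro x hx y hy
    have h := intervalIntegral.integral_add_adjacent_intervals
      (hInt 0 h0m x hx) (hInt x hx y hy)
    rw [hFval x, hFval y]
    linarith [h]
  have hFmono : MonotoneOn F (Icc (-1:ℝ) 1) := by
    intro x hx y hy hxy
    have h1 := hFdiff x hx y hy
    have h2 : 0 ≤ ∫ s in x..y, g s := by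
      apply intervalIntegral.integral_nonneg hxy
      intro u hu
      exact hg_nonneg u ⟨le_trans hx.1 hu.1, le_trans hu.2 hy.2⟩
    linarith
  have hFstrict : StrictMonoOn F (Icc (-1:ℝ) 1) := by
    intro x hx y hy hxy
    have h1 := hFdiff x hx y hy
    have h2 : 0 < ∫ s in x..y, g s := by
      apply intervalIntegral.intervalIntegral_pos_of_pos_on (hInt x hx y hy)
      · intro u hu
        exact hg_pos u ⟨lt_of_le_of_lt hx.1 hu.1, lt_of_lt_of_le hu.2 hy.2⟩
      · exact hxy
    linarith
  -- endpoint values of F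
  have hsym : (∫ s in (-1:ℝ)..0, g s) = ∫ s in (0:ℝ)..1, g s := by
    have h := intervalIntegral.integral_comp_neg (f := g) (a := (0:ℝ)) (b := 1)
    simp only [neg_zero] at h
    rw [← h]
    apply intervalIntegral.integral_congr
    intro s _
    simp only [hg_def, abs_neg]
  have hF1 : F 1 = pip / 2 := by
    have hadd := intervalIntegral.integral_add_adjacent_intervals
      (hInt (-1) hneg1m 0 h0m) (hInt 0 h0m 1 h1m)
    rw [hFval 1, hpip', ← hadd, hsym]
    ring
  have hFneg1 : F (-1) = -(pip / 2) := by
    have h := hFdiff (-1) hneg1m 1 h1m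
    rw [← hpip', hF1] at h
    linarith
  -- sinp maps the open interval into (-1,1)
  have hsinp_mem : ∀ τ ∈ Ioo (-(pip/2)) (pip/2), sinp τ ∈ Ioo (-1:ℝ) 1 := by
    intro τ hτ
    have hIcc : τ ∈ Icc (-(pip/2)) (pip/2) := Ioo_subset_Icc_self hτ
    have h1 := hrange τ hIcc
    constructor
    · rcases eq_or_lt_of_le h1.1 with heq | hlt
      · exfalso
        have h2 := hdef' τ hIcc
        rw [← heq, hFneg1] at h2
        linarith [hτ.1]
      · exact hlt
    · rcases eq_or_lt_of_le h1.2 with heq | hlt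
      · exfalso
        have h2 := hdef' τ hIcc
        rw [heq, hF1] at h2
        linarith [hτ.2]
      · exact hlt
  -- sinp is strictly monotone on the closed interval
  have hsinp_strict : StrictMonoOn sinp (Icc (-(pip/2)) (pip/2)) := by
    intro x hx y hy hxy
    by_contra hle
    push_neg at hle
    have h := hFmono (hrange y hy) (hrange x hx) hle
    rw [hdef' x hx, hdef' y hy] at h
    linarith
  -- sinp is surjective onto [-1,1]
  have hsinp_surj : ∀ y ∈ Icc (-1:ℝ) 1,
      ∃ x ∈ Icc (-(pip/2)) (pip/2), sinp x = y := by
    intro y hy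
    have hFy : F y ∈ Icc (-(pip/2)) (pip/2) := by
      constructor
      · rw [← hFneg1]; exact hFmono hneg1m hy hy.1
      · rw [← hF1]; exact hFmono hy h1m hy.2
    exact ⟨F y, hFy, hFstrict.injOn (hrange (F y) hFy) hy (hdef' (F y) hFy)⟩
  -- continuity of sinp at interior points
  have hcont : ∀ τ ∈ Ioo (-(pip/2)) (pip/2), ContinuousAt sinp τ := by
    intro τ hτ
    have hmem := hsinp_mem τ hτ
    apply hsinp_strict.continuousAt_of_image_mem_nhds
      (Icc_mem_nhds hτ.1 hτ.2)
    apply Filter.mem_of_superset (Icc_mem_nhds hmem.1 hmem.2)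
    intro y hy
    obtain ⟨x, hx, hxy⟩ := hsinp_surj y hy
    exact ⟨x, hx, hxy⟩
  -- derivative of sinp
  have hderiv : ∀ τ ∈ Ioo (-(pip/2)) (pip/2),
      HasDerivAt sinp ((1 - |sinp τ| ^ p) ^ ((1:ℝ)/p)) τ := by
    intro τ hτ
    have hmem := hsinp_mem τ hτ
    have hFd := hF_deriv (sinp τ) hmem
    have hne : g (sinp τ) ≠ 0 := (hg_pos _ hmem).ne'
    have hev : ∀ᶠ x in nhds τ, F (sinp x) = x := by
      filter_upwards [Icc_mem_nhds hτ.1 hτ.2] with x hx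
      exact hdef' x hx
    have hinv := hFd.of_local_left_inverse (hcont τ hτ) hne hev
    have heq : (g (sinp τ))⁻¹ = (1 - |sinp τ| ^ p) ^ ((1:ℝ)/p) := by
      have hnr : (1:ℝ)/p = -r := by rw [hr_def]; ring
      rw [hnr, Real.rpow_neg (hbase' _ hmem).le, hg_def]
    rwa [heq] at hinv
  -- main computation
  intro t ht
  have hmem := hsinp_mem t ht
  have hu₀pos : 0 < 1 - |sinp t| ^ p := hbase' _ hmem
  -- the function agrees with Φ near t
  have hEq : (fun s => |deriv sinp s| ^ (p-2) * deriv sinp s)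
      =ᶠ[nhds t] (fun s => (1 - |sinp s| ^ p) ^ ((p-1)/p)) := by
    filter_upwards [Ioo_mem_nhds ht.1 ht.2] with s hs
    have hd := (hderiv s hs).deriv
    have ha : 0 < 1 - |sinp s| ^ p := hbase' _ (hsinp_mem s hs)
    simp only [hd]
    rw [abs_of_nonneg (Real.rpow_nonneg ha.le _),
      ← Real.rpow_mul ha.le, ← Real.rpow_add ha]
    congr 1
    field_simp
    ring
  -- derivative of |y|^p at y₀ := sinp t
  have habs : HasDerivAt (fun y : ℝ => |y| ^ p)
      (p * |sinp t| ^ (p-2) * sinp t) (sinp t) := by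
    rcases lt_trichotomy (sinp t) 0 with hneg | hzero | hpos
    · have hne : (-(sinp t) : ℝ) ≠ 0 := ne_of_gt (by linarith : (0:ℝ) < -(sinp t))
      have h1 : HasDerivAt (fun y : ℝ => (-y) ^ p)
          (p * (-(sinp t)) ^ (p-1) * (-1)) (sinp t) :=
        (Real.hasDerivAt_rpow_const (x := -(sinp t)) (p := p)
          (Or.inl hne)).comp (sinp t) (hasDerivAt_neg (sinp t))
      have h2 : (fun y : ℝ => |y| ^ p) =ᶠ[nhds (sinp t)] (fun y : ℝ => (-y) ^ p) := by
        filter_upwards [Iio_mem_nhds hneg] with y hy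
        rw [abs_of_neg hy]
      have h3 := h1.congr_of_eventuallyEq h2
      refine h3.congr_deriv ?_
      rw [abs_of_neg hneg]
      have h4 : (-(sinp t) : ℝ) ^ (p-1) = (-(sinp t)) ^ (p-2) * (-(sinp t)) := by
        rw [show p - 1 = (p-2) + 1 by ring, Real.rpow_add_one hne]
      rw [h4]; ring
    · rw [hzero]
      have hval : p * |(0:ℝ)| ^ (p-2) * 0 = 0 := by ring
      rw [hval, hasDerivAt_iff_tendsto_slope]
      apply squeeze_zero_norm' (a := fun y : ℝ => |y| ^ (p-1))
      · filter_upwards [self_mem_nhdsWithin] with y hy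
        have hy0 : y ≠ 0 := hy
        have habs0 : (0:ℝ) < |y| := abs_pos.2 hy0
        rw [slope_def_field]
        rw [show |(0:ℝ)| ^ p = 0 by simp [Real.zero_rpow hp0.ne']]
        rw [sub_zero, sub_zero, Real.norm_eq_abs, abs_div,
          abs_of_nonneg (Real.rpow_nonneg (abs_nonneg y) p),
          Real.rpow_sub habs0, Real.rpow_one]
      · have h5 : ContinuousAt (fun y : ℝ => |y| ^ (p-1)) 0 := by
          apply ContinuousAt.comp (x := (0:ℝ))
            (Real.continuousAt_rpow_const _ _ (Or.inr (by linarith))) continuous_abs.continuousAt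
        have h6 := h5.tendsto
        rw [show |(0:ℝ)| ^ (p-1) = 0 by simp [Real.zero_rpow (by linarith : p - 1 ≠ 0)]] at h6
        exact h6.mono_left nhdsWithin_le_nhds
    · have hne : (sinp t : ℝ) ≠ 0 := hpos.ne'
      have h1 : HasDerivAt (fun y : ℝ => y ^ p)
          (p * (sinp t) ^ (p-1)) (sinp t) :=
        Real.hasDerivAt_rpow_const (Or.inl hne)
      have h2 : (fun y : ℝ => |y| ^ p) =ᶠ[nhds (sinp t)] (fun y : ℝ => y ^ p) := by
        filter_upwards [Ioi_mem_nhds hpos] with y hy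
        rw [abs_of_pos hy]
      have h3 := h1.congr_of_eventuallyEq h2
      refine h3.congr_deriv ?_
      rw [abs_of_pos hpos]
      rw [show p - 1 = (p-2) + 1 by ring, Real.rpow_add_one hne]
      ring
  have inner : HasDerivAt (fun y : ℝ => 1 - |y| ^ p)
      (-(p * |sinp t| ^ (p-2) * sinp t)) (sinp t) := by
    have h := (hasDerivAt_const (sinp t) (1:ℝ)).sub habs
    rwa [zero_sub] at h
  have hst := hderiv t ht
  have hcomp1 : HasDerivAt (fun s : ℝ => 1 - |sinp s| ^ p)
      (-(p * |sinp t| ^ (p-2) * sinp t) * ((1 - |sinp t| ^ p) ^ ((1:ℝ)/p))) t :=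
    inner.comp t hst
  have outer : HasDerivAt (fun u : ℝ => u ^ ((p-1)/p))
      (((p-1)/p) * (1 - |sinp t| ^ p) ^ ((p-1)/p - 1)) (1 - |sinp t| ^ p) :=
    Real.hasDerivAt_rpow_const (Or.inl hu₀pos.ne')
  have hΦ : HasDerivAt (fun s : ℝ => (1 - |sinp s| ^ p) ^ ((p-1)/p))
      (((p-1)/p) * (1 - |sinp t| ^ p) ^ ((p-1)/p - 1) *
        (-(p * |sinp t| ^ (p-2) * sinp t) * ((1 - |sinp t| ^ p) ^ ((1:ℝ)/p)))) t :=
    by have h := outer.comp t hcomp1; exact h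
  have hval : ((p-1)/p) * (1 - |sinp t| ^ p) ^ ((p-1)/p - 1) *
      (-(p * |sinp t| ^ (p-2) * sinp t) * ((1 - |sinp t| ^ p) ^ ((1:ℝ)/p)))
      = -(p-1) * |sinp t| ^ (p-2) * sinp t := by
    have hup : (1 - |sinp t| ^ p) ^ ((p-1)/p - 1) * (1 - |sinp t| ^ p) ^ ((1:ℝ)/p) = 1 := by
      rw [← Real.rpow_add hu₀pos]
      rw [show (p-1)/p - 1 + 1/p = 0 by field_simp; ring]
      exact Real.rpow_zero _
    calc ((p-1)/p) * (1 - |sinp t| ^ p) ^ ((p-1)/p - 1) *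
        (-(p * |sinp t| ^ (p-2) * sinp t) * ((1 - |sinp t| ^ p) ^ ((1:ℝ)/p)))
        = -((p-1)/p * p) * ((1 - |sinp t| ^ p) ^ ((p-1)/p - 1) *
            (1 - |sinp t| ^ p) ^ ((1:ℝ)/p)) * (|sinp t| ^ (p-2) * sinp t) := by ring
      _ = -(p-1) * |sinp t| ^ (p-2) * sinp t := by
          rw [hup, div_mul_cancel₀ _ hp0.ne']; ring
  rw [hval] at hΦ
  exact hΦ.congr_of_eventuallyEq hEq
end

section
/- Let p > 1, λ > 0, α = (λ/(p-1))^{1/p}, and let T : I → ℝ be Lipschitz on an interval I. If w solves (d/dt)((w')^{(p-1)}) - T(t)(w')^{(p-1)} + λ w^{(p-1)} = 0 and (e, φ) are defined by the Prüfer transformation αw = e sin_p(φ), w' = e cos_p(φ) with e > 0, then φ' = α - (T/(p-1)) cos_p^{p-1}(φ) sin_p(φ) and (log e)' = (T/(p-1)) cos_p^p(φ), at every point where w and w' do not vanish simultaneously. -/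
open Real

noncomputable def Phi (p x : ℝ) : ℝ := |x| ^ (p-2) * x

lemma Phi_zero (p : ℝ) : Phi p 0 = 0 := by simp [Phi]

lemma Phi_ne_zero {p x : ℝ} (hx : x ≠ 0) : Phi p x ≠ 0 :=
  mul_ne_zero (Real.rpow_pos_of_pos (abs_pos.mpr hx) _).ne' hx

lemma abs_Phi {p : ℝ} (hp : 1 < p) (x : ℝ) : |Phi p x| = |x| ^ (p-1) := by
  rcases eq_or_ne x 0 with rfl|hx
  · simp [Phi, Real.zero_rpow (show p-1 ≠ 0 by intro h; linarith)]
  · rw [Phi, abs_mul, abs_of_nonneg (Real.rpow_nonneg (abs_nonneg x) _),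
      show p - 1 = (p-2) + 1 by ring, Real.rpow_add_one (abs_ne_zero.mpr hx)]

lemma mul_Phi {p : ℝ} (hp : 1 < p) (x : ℝ) : x * Phi p x = |x| ^ p := by
  rcases eq_or_ne x 0 with rfl|hx
  · simp [Phi, Real.zero_rpow (show p ≠ 0 by intro h; linarith)]
  · have h : |x| ≠ 0 := abs_ne_zero.mpr hx
    calc x * Phi p x = |x|^(p-2) * |x| * |x| := by
          rw [Phi, mul_comm x, mul_assoc, ← abs_mul_abs_self]; ring
    _ = |x| ^ p := by
          rw [← Real.rpow_add_one h, ← Real.rpow_add_one h]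
          congr 1; ring

lemma Phi_scale {p : ℝ} (hp : 1 < p) {a : ℝ} (ha : 0 < a) (x : ℝ) :
    Phi p (a * x) = a ^ (p-1) * Phi p x := by
  rcases eq_or_ne x 0 with rfl|hx
  · simp [Phi]
  · rw [Phi, Phi, abs_mul, abs_of_pos ha, Real.mul_rpow ha.le (abs_nonneg x),
      show p-1 = (p-2)+1 by ring, Real.rpow_add_one ha.ne']
    ring

lemma Phi_Phi {p : ℝ} (hp : 1 < p) (x : ℝ) : Phi (p/(p-1)) (Phi p x) = x := by
  rcases eq_or_ne x 0 with rfl|hx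
  · simp [Phi]
  · have hp1 : p - 1 ≠ 0 := by intro h; linarith
    rw [Phi, abs_Phi hp, ← Real.rpow_mul (abs_nonneg x), Phi, ← mul_assoc,
      ← Real.rpow_add (abs_pos.mpr hx),
      show (p-1) * (p/(p-1) - 2) + (p-2) = 0 by field_simp; ring,
      Real.rpow_zero, one_mul]

lemma abs_Phi_rpow {p : ℝ} (hp : 1 < p) (x : ℝ) : |Phi p x| ^ (p/(p-1)) = |x| ^ p := by
  have hp1 : p - 1 ≠ 0 := by intro h; linarith
  rw [abs_Phi hp, ← Real.rpow_mul (abs_nonneg x)]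
  congr 1
  field_simp

lemma hasDerivAt_abs_rpow_Phi {r : ℝ} (hr : 1 < r) (u : ℝ) :
    HasDerivAt (fun x : ℝ => |x| ^ r) (r * Phi r u) u := by
  have := hasDerivAt_abs_rpow u hr
  rw [Phi]; rw [show r * (|u| ^ (r-2) * u) = r * |u| ^ (r-2) * u by ring]
  exact this

/-- Prüfer transformation: if `w` solves
`((w')^{(p-1)})' - T (w')^{(p-1)} + λ w^{(p-1)} = 0` and `α w = e sin_p φ`,
`w' = e cos_p φ` with `e > 0`, then wherever `w` and `w'` do not vanish
simultaneously, `φ' = α - (T/(p-1)) cos_p^{p-1}(φ) sin_p(φ)` and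
`(log e)' = e'/e = (T/(p-1)) cos_p^p(φ)`. -/
theorem pruefer_transformation
    (p lam α : ℝ) (hp : 1 < p) (hlam : 0 < lam)
    (hα : α = (lam / (p-1)) ^ ((1:ℝ)/p))
    (I : Set ℝ) (hI : IsOpen I)
    (T w w' e e' φ φ' sinp cosp : ℝ → ℝ)
    (hTlip : LipschitzOnWith 1 T I)
    (htrig : ∀ x : ℝ, |sinp x| ^ p + |cosp x| ^ p = 1)
    (hsinp' : ∀ x : ℝ, HasDerivAt sinp (cosp x) x)
    (hw : ∀ t ∈ I, HasDerivAt w (w' t) t)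
    (hode : ∀ t ∈ I, HasDerivAt (fun s => |w' s| ^ (p-2) * w' s)
      (T t * (|w' t| ^ (p-2) * w' t) - lam * (|w t| ^ (p-2) * w t)) t)
    (he : ∀ t ∈ I, HasDerivAt e (e' t) t)
    (hφ : ∀ t ∈ I, HasDerivAt φ (φ' t) t)
    (hepos : ∀ t ∈ I, 0 < e t)
    (hsin : ∀ t ∈ I, α * w t = e t * sinp (φ t))
    (hcos : ∀ t ∈ I, w' t = e t * cosp (φ t)) :
    ∀ t ∈ I, ¬ (w t = 0 ∧ w' t = 0) →
      φ' t = α - (T t / (p-1)) * (|cosp (φ t)| ^ (p-2) * cosp (φ t)) * sinp (φ t)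
      ∧ e' t / e t = (T t / (p-1)) * |cosp (φ t)| ^ p := by
  have hp1 : (0:ℝ) < p - 1 := by linarith
  have hp1' : p - 1 ≠ 0 := hp1.ne'
  have hp0 : (0:ℝ) < p := by linarith
  have hbase : 0 < lam / (p-1) := div_pos hlam hp1
  have hαpos : 0 < α := by rw [hα]; exact Real.rpow_pos_of_pos hbase _
  have hαp : α ^ p = lam / (p-1) := by
    rw [hα, ← Real.rpow_mul hbase.le, one_div_mul_cancel hp0.ne', Real.rpow_one]
  have hlam_eq : lam = (p-1) * (α ^ (p-1) * α) := by
    rw [← Real.rpow_add_one hαpos.ne', show (p-1)+1 = p by ring, hαp]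
    field_simp
  have hq : 1 < p / (p-1) := by rw [lt_div_iff₀ hp1]; linarith
  have hsin_le : ∀ x, |sinp x| ≤ 1 := by
    intro x
    by_contra h
    push_neg at h
    have h1 : 1 < |sinp x| ^ p :=
      (Real.one_lt_rpow_iff_of_pos (by linarith)).mpr (Or.inl ⟨h, hp0⟩)
    have h2 : 0 ≤ |cosp x| ^ p := Real.rpow_nonneg (abs_nonneg _) _
    have := htrig x
    linarith
  have hcos_le : ∀ x, |cosp x| ≤ 1 := by
    intro x
    by_contra h
    push_neg at h
    have h1 : 1 < |cosp x| ^ p :=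
      (Real.one_lt_rpow_iff_of_pos (by linarith)).mpr (Or.inl ⟨h, hp0⟩)
    have h2 : 0 ≤ |sinp x| ^ p := Real.rpow_nonneg (abs_nonneg _) _
    have := htrig x
    linarith
  -- master facts at every point of I
  have master : ∀ t ∈ I,
      (e' t * sinp (φ t) + e t * (cosp (φ t) * φ' t) = α * (e t * cosp (φ t)))
      ∧ HasDerivAt (fun s => Phi p (cosp (φ s)))
        (T t * Phi p (cosp (φ t)) - (p-1) * α * Phi p (sinp (φ t))
          - (p-1) * (e' t / e t) * Phi p (cosp (φ t))) t := by
    intro t ht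
    have hE : 0 < e t := hepos t ht
    have hEne : e t ≠ 0 := hE.ne'
    have hIn : I ∈ nhds t := hI.mem_nhds ht
    have hvPhi : ∀ s ∈ I, (|w' s| ^ (p-2) * w' s) = e s ^ (p-1) * Phi p (cosp (φ s)) := by
      intro s hs
      rw [hcos s hs]
      exact Phi_scale hp (hepos s hs) _
    constructor
    · have d1 : HasDerivAt (fun s => e s * sinp (φ s))
          (e' t * sinp (φ t) + e t * (cosp (φ t) * φ' t)) t :=
        (he t ht).mul ((hsinp' (φ t)).comp t (hφ t ht))
      have d2 : HasDerivAt (fun s => α * w s) (α * w' t) t := (hw t ht).const_mul α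
      have heq : (fun s => α * w s) =ᶠ[nhds t] (fun s => e s * sinp (φ s)) := by
        filter_upwards [hIn] with s hs
        exact hsin s hs
      have d2' : HasDerivAt (fun s => e s * sinp (φ s)) (α * w' t) t :=
        d2.congr_of_eventuallyEq heq.symm
      have huni := d1.unique d2'
      rw [huni, hcos t ht]
    · have hEp : HasDerivAt (fun s => e s ^ (p-1)) (e' t * (p-1) * e t ^ (p-1-1)) t :=
        (he t ht).rpow_const (Or.inl hEne)
      have hPne : e t ^ (p-1) ≠ 0 := (Real.rpow_pos_of_pos hE _).ne'
      have hdiv : HasDerivAt (fun s => (|w' s| ^ (p-2) * w' s) / e s ^ (p-1))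
          (((T t * (|w' t| ^ (p-2) * w' t) - lam * (|w t| ^ (p-2) * w t)) * e t ^ (p-1)
            - (|w' t| ^ (p-2) * w' t) * (e' t * (p-1) * e t ^ (p-1-1))) / (e t ^ (p-1)) ^ 2) t :=
        (hode t ht).div hEp hPne
      have heq2 : (fun s => (|w' s| ^ (p-2) * w' s) / e s ^ (p-1)) =ᶠ[nhds t]
          (fun s => Phi p (cosp (φ s))) := by
        filter_upwards [hIn] with s hs
        rw [hvPhi s hs, mul_comm, mul_div_assoc, div_self (Real.rpow_pos_of_pos (hepos s hs) _).ne',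
          mul_one]
      refine (hdiv.congr_of_eventuallyEq heq2.symm).congr_deriv ?_
      have hw_eq : w t = (e t / α) * sinp (φ t) := by
        have := hsin t ht
        field_simp
        linarith [this]
      have hwP : (|w t| ^ (p-2) * w t) = (e t / α) ^ (p-1) * Phi p (sinp (φ t)) := by
        rw [hw_eq]
        exact Phi_scale hp (div_pos hE hαpos) _
      have hdr : (e t / α) ^ (p-1) = e t ^ (p-1) / α ^ (p-1) :=
        Real.div_rpow hE.le hαpos.le _
      have hPQ : e t ^ (p-1) = e t ^ (p-1-1) * e t := by
        rw [← Real.rpow_add_one hEne]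
        congr 1; ring
      have hAne : α ^ (p-1) ≠ 0 := (Real.rpow_pos_of_pos hαpos _).ne'
      have hQne : e t ^ (p-1-1) ≠ 0 := (Real.rpow_pos_of_pos hE _).ne'
      rw [hvPhi t ht, hwP, hdr, hlam_eq, hPQ]
      field_simp
  -- the relation G' = -(p-1) u φ' where cosp (φ t) ≠ 0
  have keyG : ∀ t ∈ I, cosp (φ t) ≠ 0 →
      T t * Phi p (cosp (φ t)) - (p-1) * α * Phi p (sinp (φ t))
        - (p-1) * (e' t / e t) * Phi p (cosp (φ t))
      = -((p-1) * Phi p (sinp (φ t)) * φ' t) := by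
    intro t ht hC
    have dS : HasDerivAt (fun s => sinp (φ s)) (cosp (φ t) * φ' t) t :=
      (hsinp' (φ t)).comp t (hφ t ht)
    have dK1 : HasDerivAt (fun s => 1 - |sinp (φ s)| ^ p)
        (-(p * Phi p (sinp (φ t)) * (cosp (φ t) * φ' t))) t := by
      have h0 := ((hasDerivAt_abs_rpow_Phi hp (sinp (φ t))).comp t dS).const_sub 1
      exact h0.congr_deriv (by ring)
    have dK2 : HasDerivAt (fun s => |Phi p (cosp (φ s))| ^ (p/(p-1)))
        ((p/(p-1)) * Phi (p/(p-1)) (Phi p (cosp (φ t)))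
          * (T t * Phi p (cosp (φ t)) - (p-1) * α * Phi p (sinp (φ t))
            - (p-1) * (e' t / e t) * Phi p (cosp (φ t)))) t := by
      have h0 := (hasDerivAt_abs_rpow_Phi hq (Phi p (cosp (φ t)))).comp t (master t ht).2
      exact h0.congr_deriv (by ring)
    have hfun : (fun s => |Phi p (cosp (φ s))| ^ (p/(p-1)))
        = (fun s => 1 - |sinp (φ s)| ^ p) := by
      funext s
      rw [abs_Phi_rpow hp, ← htrig (φ s)]
      ring
    rw [hfun] at dK2
    have huniq := dK2.unique dK1
    rw [Phi_Phi hp] at huniq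
    have hqp : (p/(p-1)) * (p-1) = p := by field_simp
    have h2 : cosp (φ t) * ((p/(p-1)) * ((T t * Phi p (cosp (φ t)) - (p-1) * α * Phi p (sinp (φ t))
        - (p-1) * (e' t / e t) * Phi p (cosp (φ t))) + (p-1) * Phi p (sinp (φ t)) * φ' t)) = 0 := by
      linear_combination huniq + (Phi p (sinp (φ t)) * cosp (φ t) * φ' t) * hqp
    have hq0 : p/(p-1) ≠ 0 := by positivity
    have h3 := (mul_eq_zero.mp h2).resolve_left hC
    have h4 := (mul_eq_zero.mp h3).resolve_left hq0
    linarith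
  -- the conclusion where cosp (φ t) ≠ 0
  have key : ∀ t ∈ I, cosp (φ t) ≠ 0 →
      φ' t = α - (T t / (p-1)) * (|cosp (φ t)| ^ (p-2) * cosp (φ t)) * sinp (φ t)
      ∧ e' t / e t = (T t / (p-1)) * |cosp (φ t)| ^ p := by
    intro t ht hC
    have hE : 0 < e t := hepos t ht
    have hEne : e t ≠ 0 := hE.ne'
    have hB := (master t ht).1
    have hA := keyG t ht hC
    have hone : sinp (φ t) * Phi p (sinp (φ t)) + cosp (φ t) * Phi p (cosp (φ t)) = 1 := by
      rw [mul_Phi hp, mul_Phi hp]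
      exact htrig (φ t)
    have hB' : (e' t / e t) * sinp (φ t) + cosp (φ t) * φ' t = α * cosp (φ t) := by
      field_simp
      linear_combination hB
    have g1 : (p-1) * φ' t = (p-1) * α - T t * Phi p (cosp (φ t)) * sinp (φ t) := by
      linear_combination sinp (φ t) * hA + (p-1) * Phi p (cosp (φ t)) * hB'
        + ((p-1) * α - (p-1) * φ' t) * hone
    have hy : φ' t = α - (T t / (p-1)) * Phi p (cosp (φ t)) * sinp (φ t) := by
      field_simp
      linear_combination g1
    refine ⟨hy, ?_⟩
    rw [show (|cosp (φ t)| ^ p : ℝ) = cosp (φ t) * Phi p (cosp (φ t)) from (mul_Phi hp _).symm]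
    by_cases hS : sinp (φ t) = 0
    · have hu0 : Phi p (sinp (φ t)) = 0 := by rw [hS]; exact Phi_zero p
      have hone' : cosp (φ t) * Phi p (cosp (φ t)) = 1 := by
        rw [hS, zero_mul, zero_add] at hone
        exact hone
      have hGne : Phi p (cosp (φ t)) ≠ 0 := Phi_ne_zero hC
      have hA2 := hA
      rw [hu0] at hA2
      have h5 : Phi p (cosp (φ t)) * (T t - (p-1) * (e' t / e t)) = 0 := by
        linear_combination hA2
      have h6 := (mul_eq_zero.mp h5).resolve_left hGne
      rw [hone', mul_one, eq_div_iff hp1']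
      linear_combination -h6
    · have h5 : (e' t / e t) * sinp (φ t)
          = ((T t / (p-1)) * (cosp (φ t) * Phi p (cosp (φ t)))) * sinp (φ t) := by
        linear_combination hB' - cosp (φ t) * hy
      exact mul_right_cancel₀ hS h5
  intro t ht hnz
  by_cases hCC : cosp (φ t) = 0
  · -- hard case
    have hE : 0 < e t := hepos t ht
    have hw'0 : w' t = 0 := by rw [hcos t ht, hCC, mul_zero]
    have hw0 : w t ≠ 0 := fun h => hnz ⟨h, hw'0⟩
    have habs : |sinp (φ t)| = 1 := by
      have h1 := htrig (φ t)
      rw [hCC, abs_zero, Real.zero_rpow hp0.ne', add_zero] at h1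
      have h2 : |sinp (φ t)| = (|sinp (φ t)| ^ p) ^ ((1:ℝ)/p) := by
        rw [← Real.rpow_mul (abs_nonneg _), mul_one_div_cancel hp0.ne', Real.rpow_one]
      rw [h2, h1, Real.one_rpow]
    have hs0ne : sinp (φ t) ≠ 0 := by
      intro h
      rw [h, abs_zero] at habs
      norm_num at habs
    have hPhis0 : Phi p (sinp (φ t)) = sinp (φ t) := by
      rw [Phi, habs, Real.one_rpow, one_mul]
    have hz : e' t = 0 := by
      have hB := (master t ht).1
      rw [hCC] at hB
      simp only [mul_zero, zero_mul, add_zero] at hB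
      exact (mul_eq_zero.mp hB).resolve_right hs0ne
    have part2 : e' t / e t = (T t / (p-1)) * |cosp (φ t)| ^ p := by
      rw [hz, zero_div, hCC, abs_zero, Real.zero_rpow hp0.ne', mul_zero]
    -- derivative of G at t
    have hGd : HasDerivAt (fun s => Phi p (cosp (φ s))) (-((p-1) * α * sinp (φ t))) t := by
      have h0 := (master t ht).2
      rw [hCC, Phi_zero, hz, hPhis0] at h0
      exact h0.congr_deriv (by ring)
    have hNt : HasDerivAt (fun r => Phi p (cosp (φ r)) + ((p-1) * sinp (φ t)) * φ r)
        (-((p-1) * α * sinp (φ t)) + ((p-1) * sinp (φ t)) * φ' t) t :=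
      hGd.add ((hφ t ht).const_mul _)
    -- punctured neighborhood: cosp (φ s) ≠ 0
    have hv0 : (|w' t| ^ (p-2) * w' t) = 0 := by rw [hw'0, mul_zero]
    have hvne : T t * (|w' t| ^ (p-2) * w' t) - lam * (|w t| ^ (p-2) * w t) ≠ 0 := by
      rw [hv0, mul_zero, zero_sub, neg_ne_zero]
      exact mul_ne_zero hlam.ne' (Phi_ne_zero hw0)
    have hCne : ∀ᶠ s in nhdsWithin t {t}ᶜ, cosp (φ s) ≠ 0 := by
      have hslope := (hasDerivAt_iff_tendsto_slope.mp (hode t ht)).eventually_ne hvne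
      have hIev : ∀ᶠ s in nhds t, s ∈ I := hI.mem_nhds ht
      have hInn : ∀ᶠ s in nhdsWithin t {t}ᶜ, s ∈ I :=
        Filter.Eventually.filter_mono nhdsWithin_le_nhds hIev
      filter_upwards [hslope, hInn] with s hs hsI
      intro h0
      apply hs
      rw [slope_def_field, hcos s hsI, h0, mul_zero, hv0]
      simp
    -- continuity of u = Phi p (sinp (φ ·)) at t
    have hu_cont : Filter.Tendsto (fun s => Phi p (sinp (φ s))) (nhds t)
        (nhds (sinp (φ t))) := by
      have hS_cont : Filter.Tendsto (fun s => sinp (φ s)) (nhds t) (nhds (sinp (φ t))) :=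
        (((hsinp' (φ t)).comp t (hφ t ht)).continuousAt :)
      have houter : ContinuousAt (fun x : ℝ => Phi p x) (sinp (φ t)) := by
        have h1 : ContinuousAt (fun x : ℝ => |x| ^ (p-2)) (sinp (φ t)) :=
          continuous_abs.continuousAt.rpow_const
            (Or.inl (by rw [habs]; norm_num))
        exact h1.mul continuousAt_id
      have hg : ContinuousAt (fun s => sinp (φ s)) t :=
        ((hsinp' (φ t)).comp t (hφ t ht)).continuousAt
      have hF : Filter.Tendsto (fun s => Phi p (sinp (φ s))) (nhds t)
          (nhds (Phi p (sinp (φ t)))) := houter.tendsto.comp hg.tendsto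
      rwa [hPhis0] at hF
    -- the bound B
    set B : ℝ := (p-1) * α + |T t| + 1 with hBdef
    have hBpos : 0 < B := by positivity
    have hcB : ∀ ε > 0, |(-((p-1) * α * sinp (φ t)) + ((p-1) * sinp (φ t)) * φ' t)| ≤ B * ε := by
      intro ε hε
      have ev1 : ∀ᶠ s in nhds t, s ∈ I := hI.mem_nhds ht
      have ev2 : ∀ᶠ s in nhds t, |Phi p (sinp (φ s)) - sinp (φ t)| < ε := by
        have h1 := Metric.tendsto_nhds.mp hu_cont ε hε
        filter_upwards [h1] with s hs
        rwa [Real.dist_eq] at hs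
      have ev3 : ∀ᶠ s in nhds t, dist s t < 1 :=
        Metric.eventually_nhds_iff.mpr ⟨1, one_pos, fun s hs => hs⟩
      have ev4 : ∀ᶠ s in nhds t, s ≠ t → cosp (φ s) ≠ 0 := by
        have := eventually_nhdsWithin_iff.mp hCne
        filter_upwards [this] with s hs hne
        exact hs hne
      obtain ⟨δ, hδpos, hδall⟩ :=
        Metric.eventually_nhds_iff.mp ((ev1.and (ev2.and (ev3.and ev4))))
      -- pointwise derivative bound on the punctured ball
      have hbound : ∀ ξ, ξ ≠ t → dist ξ t < δ →
          |(T ξ * Phi p (cosp (φ ξ)) - (p-1) * α * Phi p (sinp (φ ξ))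
            - (p-1) * (e' ξ / e ξ) * Phi p (cosp (φ ξ))) + ((p-1) * sinp (φ t)) * φ' ξ|
            ≤ B * ε := by
        intro ξ hξne hξδ
        obtain ⟨hξI, hξε, hξ1, hξC⟩ := hδall hξδ
        have hCξ : cosp (φ ξ) ≠ 0 := hξC hξne
        have hGrel := keyG ξ hξI hCξ
        have hyξ := (key ξ hξI hCξ).1
        -- |T ξ| ≤ |T t| + 1
        have hTξ : |T ξ| ≤ |T t| + 1 := by
          have h1 := hTlip.dist_le_mul ξ hξI t ht
          rw [Real.dist_eq, Real.dist_eq] at h1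
          have h2 : |T ξ - T t| ≤ |ξ - t| := by
            simpa using h1
          have h3 := abs_sub_abs_le_abs_sub (T ξ) (T t)
          have h4 : |ξ - t| < 1 := by rwa [Real.dist_eq] at hξ1
          linarith
        -- |φ' ξ| ≤ α + (|T t| + 1)/(p-1)
        have hGle : |(|cosp (φ ξ)| ^ (p-2) * cosp (φ ξ))| ≤ 1 := by
          rw [show (|cosp (φ ξ)| ^ (p-2) * cosp (φ ξ)) = Phi p (cosp (φ ξ)) from rfl,
            abs_Phi hp]
          exact Real.rpow_le_one (abs_nonneg _) (hcos_le _) (by linarith)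
        have hSle : |sinp (φ ξ)| ≤ 1 := hsin_le _
        have hφle : |φ' ξ| ≤ α + (|T t| + 1)/(p-1) := by
          rw [hyξ]
          have h5 : |α - (T ξ / (p-1)) * (|cosp (φ ξ)| ^ (p-2) * cosp (φ ξ)) * sinp (φ ξ)|
              ≤ |α| + |(T ξ / (p-1)) * (|cosp (φ ξ)| ^ (p-2) * cosp (φ ξ)) * sinp (φ ξ)| := by
            rw [sub_eq_add_neg]
            refine (abs_add_le _ _).trans ?_
            rw [abs_neg]
          have h6 : |(T ξ / (p-1)) * (|cosp (φ ξ)| ^ (p-2) * cosp (φ ξ)) * sinp (φ ξ)|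
              ≤ ((|T t| + 1)/(p-1)) * 1 * 1 := by
            rw [abs_mul, abs_mul, abs_div, abs_of_pos hp1]
            have hTdiv : |T ξ|/(p-1) ≤ (|T t| + 1)/(p-1) := by gcongr
            exact mul_le_mul (mul_le_mul hTdiv hGle (abs_nonneg _) (by positivity))
              hSle (abs_nonneg _) (by positivity)
          rw [abs_of_pos hαpos] at h5
          have h7 : ((|T t| + 1)/(p-1)) * 1 * 1 = (|T t| + 1)/(p-1) := by ring
          linarith [h5, h6]
        -- assemble
        rw [hGrel]
        have h8 : -((p-1) * Phi p (sinp (φ ξ)) * φ' ξ) + ((p-1) * sinp (φ t)) * φ' ξ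
            = (p-1) * (sinp (φ t) - Phi p (sinp (φ ξ))) * φ' ξ := by ring
        rw [h8, abs_mul, abs_mul, abs_of_pos hp1]
        have h9 : |sinp (φ t) - Phi p (sinp (φ ξ))| ≤ ε := by
          rw [abs_sub_comm]
          linarith [hξε]
        calc (p-1) * |sinp (φ t) - Phi p (sinp (φ ξ))| * |φ' ξ|
            ≤ (p-1) * ε * (α + (|T t| + 1)/(p-1)) :=
              mul_le_mul (mul_le_mul le_rfl h9 (abs_nonneg _) hp1.le) hφle (abs_nonneg _)
                (by positivity)
        _ = B * ε := by rw [hBdef]; field_simp; ring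
      -- slope bound
      have hslopeN : ∀ᶠ s in nhdsWithin t {t}ᶜ,
          |slope (fun r => Phi p (cosp (φ r)) + ((p-1) * sinp (φ t)) * φ r) t s| ≤ B * ε := by
        have evδ : ∀ᶠ s in nhdsWithin t {t}ᶜ, dist s t < δ :=
          (Metric.eventually_nhds_iff.mpr ⟨δ, hδpos, fun s hs => hs⟩).filter_mono
            nhdsWithin_le_nhds
        filter_upwards [evδ, self_mem_nhdsWithin] with s hsδ hsne
        have hsne' : s ≠ t := hsne
        have hmem : ∀ r, r ∈ Set.Icc (min t s) (max t s) →
            (r ∈ I ∧ (r ≠ t → cosp (φ r) ≠ 0) ∧ dist r t < δ) := by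
          intro r hr
          have hd : dist r t < δ := by
            rw [Real.dist_eq] at hsδ ⊢
            rcases le_total t s with h|h
            · rw [min_eq_left h, max_eq_right h] at hr
              have e1 : |r - t| = r - t := abs_of_nonneg (by linarith [hr.1])
              have e2 : |s - t| = s - t := abs_of_nonneg (by linarith)
              rw [e1]; rw [e2] at hsδ; linarith [hr.2]
            · rw [min_eq_right h, max_eq_left h] at hr
              have e1 : |r - t| = -(r - t) := abs_of_nonpos (by linarith [hr.2])
              have e2 : |s - t| = -(s - t) := abs_of_nonpos (by linarith)
              rw [e1]; rw [e2] at hsδ; linarith [hr.1]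
          obtain ⟨h1, _, _, h4⟩ := hδall hd
          exact ⟨h1, h4, hd⟩
        have hflip : ∀ A B : ℝ, (A - B)/(s - t) = (B - A)/(t - s) := by
          intro A B
          rw [div_eq_div_iff (sub_ne_zero.mpr hsne') (sub_ne_zero.mpr hsne'.symm)]
          ring
        rcases lt_or_gt_of_ne hsne' with hlt|hgt
        · have hmin : min t s = s := min_eq_right hlt.le
          have hmax : max t s = t := max_eq_left hlt.le
          obtain ⟨ξ, hξmem, hξeq⟩ := exists_hasDerivAt_eq_slope
            (fun r => Phi p (cosp (φ r)) + ((p-1) * sinp (φ t)) * φ r)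
            (fun r => (T r * Phi p (cosp (φ r)) - (p-1) * α * Phi p (sinp (φ r))
              - (p-1) * (e' r / e r) * Phi p (cosp (φ r))) + ((p-1) * sinp (φ t)) * φ' r)
            hlt
            (fun r hr => by
              obtain ⟨hrI, -, -⟩ := hmem r (by rw [hmin, hmax]; exact hr)
              exact (((master r hrI).2.add ((hφ r hrI).const_mul _)).continuousAt).continuousWithinAt)
            (fun r hr => by
              obtain ⟨hrI, -, -⟩ := hmem r (by rw [hmin, hmax]; exact ⟨hr.1.le, hr.2.le⟩)
              exact (master r hrI).2.add ((hφ r hrI).const_mul _))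
          have hξt : ξ ≠ t := ne_of_lt hξmem.2
          have hξδ : dist ξ t < δ :=
            (hmem ξ (by rw [hmin, hmax]; exact ⟨hξmem.1.le, hξmem.2.le⟩)).2.2
          have hb := hbound ξ hξt hξδ
          rw [slope_def_field, hflip, ← hξeq]
          exact hb
        · have hmin : min t s = t := min_eq_left hgt.le
          have hmax : max t s = s := max_eq_right hgt.le
          obtain ⟨ξ, hξmem, hξeq⟩ := exists_hasDerivAt_eq_slope
            (fun r => Phi p (cosp (φ r)) + ((p-1) * sinp (φ t)) * φ r)
            (fun r => (T r * Phi p (cosp (φ r)) - (p-1) * α * Phi p (sinp (φ r))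
              - (p-1) * (e' r / e r) * Phi p (cosp (φ r))) + ((p-1) * sinp (φ t)) * φ' r)
            hgt
            (fun r hr => by
              obtain ⟨hrI, -, -⟩ := hmem r (by rw [hmin, hmax]; exact hr)
              exact (((master r hrI).2.add ((hφ r hrI).const_mul _)).continuousAt).continuousWithinAt)
            (fun r hr => by
              obtain ⟨hrI, -, -⟩ := hmem r (by rw [hmin, hmax]; exact ⟨hr.1.le, hr.2.le⟩)
              exact (master r hrI).2.add ((hφ r hrI).const_mul _))
          have hξt : ξ ≠ t := ne_of_gt hξmem.1
          have hξδ : dist ξ t < δ :=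
            (hmem ξ (by rw [hmin, hmax]; exact ⟨hξmem.1.le, hξmem.2.le⟩)).2.2
          have hb := hbound ξ hξt hξδ
          rw [slope_def_field, ← hξeq]
          exact hb
      have hts := (hasDerivAt_iff_tendsto_slope.mp hNt).abs
      exact le_of_tendsto hts hslopeN
    -- conclude φ' t = α
    have hc0 : -((p-1) * α * sinp (φ t)) + ((p-1) * sinp (φ t)) * φ' t = 0 := by
      by_contra hc
      have h1 : 0 < |(-((p-1) * α * sinp (φ t)) + ((p-1) * sinp (φ t)) * φ' t)| := abs_pos.mpr hc
      have h2 := hcB (|(-((p-1) * α * sinp (φ t)) + ((p-1) * sinp (φ t)) * φ' t)| / (2 * B))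
        (by positivity)
      have h3 : B * (|(-((p-1) * α * sinp (φ t)) + ((p-1) * sinp (φ t)) * φ' t)| / (2 * B))
          = |(-((p-1) * α * sinp (φ t)) + ((p-1) * sinp (φ t)) * φ' t)| / 2 := by
        field_simp
      rw [h3] at h2
      linarith
    have hy : φ' t = α := by
      have h2 : ((p-1) * sinp (φ t)) * (φ' t - α) = 0 := by linear_combination hc0
      have h3 := (mul_eq_zero.mp h2).resolve_left (mul_ne_zero hp1' hs0ne)
      linarith [h3]
    constructor
    · rw [hy, hCC]
      simp
    · exact part2
  · exact key t ht hCC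
end

section
/- With ρ(x) = cos^{n-1}(√κ x) and T fixed with -π/(2√κ) < t ≤ x ≤ T < π/(2√κ), the quantity ∫_t^x ρ(t)/ρ(y) dy is bounded by a constant C depending only on n and T (uniformly in t and x). -/
open Real

/-- With `ρ(x) = cos^{n-1}(√κ x)` and `T` fixed, the quantity
`∫_t^x ρ(t)/ρ(y) dy` is bounded by a constant depending only on `n` and `T`,
uniformly in `-π/(2√κ) < t ≤ x ≤ T`. -/
theorem rho_integral_uniform_bound
    (κ n T : ℝ) (hκ : 0 < κ) (hn : 1 ≤ n) (hT : T < π / (2 * Real.sqrt κ))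
    (ρ : ℝ → ℝ) (hρ : ∀ x : ℝ, ρ x = Real.cos (Real.sqrt κ * x) ^ (n-1)) :
    ∃ C : ℝ, ∀ t x : ℝ, -(π / (2 * Real.sqrt κ)) < t → t ≤ x → x ≤ T →
      |∫ y in t..x, ρ t / ρ y| ≤ C := by
  have hs : 0 < Real.sqrt κ := Real.sqrt_pos.mpr hκ
  set s := Real.sqrt κ with hsdef
  have hkey : s * (π / (2 * s)) = π / 2 := by field_simp
  by_cases hT' : -(π / (2 * s)) < T
  · have hsT : s * T < π / 2 := by
      have := mul_lt_mul_of_pos_left hT hs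
      rwa [hkey] at this
    have hsT' : -(π / 2) < s * T := by
      have := mul_lt_mul_of_pos_left hT' hs
      rw [mul_neg, hkey] at this
      linarith
    have hcT : 0 < Real.cos (s * T) := Real.cos_pos_of_mem_Ioo ⟨hsT', hsT⟩
    have hcT1 : Real.cos (s * T) ≤ 1 := Real.cos_le_one _
    set M : ℝ := (Real.cos (s * T))⁻¹ ^ (n - 1) with hM
    have hM0 : 0 ≤ M := Real.rpow_nonneg (by positivity) _
    refine ⟨M * (T + π / (2 * s)), ?_⟩
    intro t x ht htx hxT
    have hst' : -(π / 2) < s * t := by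
      have := mul_lt_mul_of_pos_left ht hs
      rw [mul_neg, hkey] at this
      linarith
    have hstT : s * t ≤ s * T := by
      have : t ≤ T := le_trans htx hxT
      nlinarith
    have hct : 0 < Real.cos (s * t) :=
      Real.cos_pos_of_mem_Ioo ⟨hst', lt_of_le_of_lt hstT hsT⟩
    have hct1 : Real.cos (s * t) ≤ 1 := Real.cos_le_one _
    have key : ∀ y ∈ Set.uIoc t x, ‖ρ t / ρ y‖ ≤ M := by
      intro y hy
      rw [Set.uIoc_of_le htx] at hy
      obtain ⟨hty, hyx⟩ := hy
      have hsty : s * t ≤ s * y := by nlinarith [hty.le]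
      have hsyT : s * y ≤ s * T := by nlinarith [le_trans hyx hxT]
      have hcy : 0 < Real.cos (s * y) :=
        Real.cos_pos_of_mem_Ioo ⟨lt_of_lt_of_le hst' hsty, lt_of_le_of_lt hsyT hsT⟩
      -- key inequality : cos(st)*cos(sT) ≤ cos(sy)
      have hmain : Real.cos (s * t) * Real.cos (s * T) ≤ Real.cos (s * y) := by
        rcases le_or_gt 0 (s * y) with h0 | h0
        · have : Real.cos (s * T) ≤ Real.cos (s * y) :=
            Real.cos_le_cos_of_nonneg_of_le_pi h0 (by linarith [Real.pi_pos]) hsyT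
          nlinarith
        · have h1 : Real.cos (s * y) = Real.cos (-(s * y)) := (Real.cos_neg _).symm
          have h2 : Real.cos (s * t) = Real.cos (-(s * t)) := (Real.cos_neg _).symm
          have : Real.cos (-(s * t)) ≤ Real.cos (-(s * y)) :=
            Real.cos_le_cos_of_nonneg_of_le_pi (by linarith) (by linarith [Real.pi_pos])
              (by linarith)
          nlinarith
      have hratio : Real.cos (s * t) / Real.cos (s * y) ≤ (Real.cos (s * T))⁻¹ := by
        rw [div_le_iff₀ hcy, inv_mul_eq_div, le_div_iff₀ hcT]
        linarith
      have hle : ρ t / ρ y ≤ M := by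
        rw [hρ, hρ, ← Real.div_rpow hct.le hcy.le, hM]
        exact Real.rpow_le_rpow (by positivity) hratio (by linarith)
      have hpos : 0 ≤ ρ t / ρ y := by
        rw [hρ, hρ]
        positivity
      rwa [Real.norm_eq_abs, abs_of_nonneg hpos]
    have hbound := intervalIntegral.norm_integral_le_of_norm_le_const key
    rw [Real.norm_eq_abs] at hbound
    calc |∫ y in t..x, ρ t / ρ y| ≤ M * |x - t| := hbound
      _ ≤ M * (T + π / (2 * s)) := by
          apply mul_le_mul_of_nonneg_left _ hM0
          rw [abs_of_nonneg (by linarith)]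
          linarith
  · refine ⟨0, ?_⟩
    intro t x ht htx hxT
    exact absurd rfl (by linarith [not_lt.mp hT'] : ¬ (0:ℝ) = 0)
end

section
/- Let κ > 0, n ≥ 1, λ ∈ ℝ, p > 1, and let w_a denote the solution on [a, T] of (d/dt)((w')^{(p-1)}) − (n−1)√κ tan(√κ t)(w')^{(p-1)} + λ w^{(p-1)} = 0 with w(a) = −1, w'(a) = 0, for a ∈ [−π/(2√κ), T). Then for each fixed x ∈ (−π/(2√κ), T], w_a(x) → w_{−π/(2√κ)}(x) and w_a'(x) → w'_{−π/(2√κ)}(x) as a → −π/(2√κ)⁺. -/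
set_option maxHeartbeats 1000000


open Real

/-- Continuous dependence on the left endpoint up to the singular endpoint
`-π/(2√κ)` (case `p = 2`): if `w a` solves `(ρ (w a)')' + λ ρ (w a) = 0` on
`(a, T]` with `w a (a) = -1`, `(w a)'(a) = 0`, where `ρ(x) = cos^{n-1}(√κ x)`,
then for each fixed `x`, `w a x → w a₀ x` and `(w a)'(x) → (w a₀)'(x)` as
`a → a₀⁺ := -π/(2√κ)⁺`. -/
theorem continuous_dependence_left_endpoint
    (κ lam n T : ℝ) (hκ : 0 < κ) (hn : 1 ≤ n) (hT : T < π / (2 * Real.sqrt κ))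
    (hTa : -(π / (2 * Real.sqrt κ)) < T)
    (ρ : ℝ → ℝ) (hρ : ∀ x : ℝ, ρ x = Real.cos (Real.sqrt κ * x) ^ (n-1))
    (w w' : ℝ → ℝ → ℝ)
    (hinit : ∀ a ∈ Set.Ico (-(π / (2 * Real.sqrt κ))) T,
      w a a = -1 ∧ w' a a = 0)
    (hder : ∀ a ∈ Set.Ico (-(π / (2 * Real.sqrt κ))) T,
      ∀ x ∈ Set.Icc a T, HasDerivAt (w a) (w' a x) x)
    (hode : ∀ a ∈ Set.Ico (-(π / (2 * Real.sqrt κ))) T,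
      ∀ x ∈ Set.Icc a T,
        HasDerivAt (fun y => ρ y * w' a y) (-(lam * ρ x * w a x)) x) :
    ∀ x ∈ Set.Ioc (-(π / (2 * Real.sqrt κ))) T,
      Filter.Tendsto (fun a => w a x)
        (nhdsWithin (-(π / (2 * Real.sqrt κ))) (Set.Ioi (-(π / (2 * Real.sqrt κ)))))
        (nhds (w (-(π / (2 * Real.sqrt κ))) x))
      ∧ Filter.Tendsto (fun a => w' a x)
        (nhdsWithin (-(π / (2 * Real.sqrt κ))) (Set.Ioi (-(π / (2 * Real.sqrt κ)))))
        (nhds (w' (-(π / (2 * Real.sqrt κ))) x)) := by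
  intro x hx
  set s : ℝ := Real.sqrt κ with hs_def
  have hs : 0 < s := Real.sqrt_pos.2 hκ
  set a₀ : ℝ := -(π / (2 * s)) with ha₀_def
  have hsa₀ : s * a₀ = -(π / 2) := by
    rw [ha₀_def]; field_simp
  have hsT : s * T < π / 2 := by
    have := mul_lt_mul_of_pos_left hT hs
    rw [show s * (π / (2 * s)) = π / 2 by field_simp] at this
    exact this
  -- basic positivity of cosine and ρ on (a₀, T]
  have hcos : ∀ t : ℝ, a₀ < t → t ≤ T → 0 < Real.cos (s * t) := by
    intro t h1 h2
    apply Real.cos_pos_of_mem_Ioo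
    constructor
    · rw [← hsa₀]; exact mul_lt_mul_of_pos_left h1 hs
    · exact lt_of_le_of_lt (mul_le_mul_of_nonneg_left h2 hs.le) hsT
  have hρpos : ∀ t : ℝ, a₀ < t → t ≤ T → 0 < ρ t := by
    intro t h1 h2
    rw [hρ]
    exact Real.rpow_pos_of_pos (hcos t h1 h2) _
  -- derivative of ρ
    -- ρ' t
  set ρ' : ℝ → ℝ := fun t => (n-1) * Real.cos (s*t) ^ (n-1-1) * (-Real.sin (s*t) * (s*1))
    with hρ'_def
  have hρd : ∀ t : ℝ, Real.cos (s*t) ≠ 0 → HasDerivAt ρ (ρ' t) t := by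
    intro t hc
    have hρeq : ρ = fun y => Real.cos (s*y) ^ (n-1) := funext hρ
    rw [hρeq]
    have h1 : HasDerivAt (fun y : ℝ => s * y) (s * 1) t := (hasDerivAt_id t).const_mul s
    have h2 : HasDerivAt (fun y : ℝ => Real.cos (s*y)) (-Real.sin (s*t) * (s*1)) t :=
      (Real.hasDerivAt_cos (s*t)).comp t h1
    exact (Real.hasDerivAt_rpow_const (p := n-1) (Or.inl hc)).comp t h2
  set q : ℝ → ℝ := fun t => ρ' t / ρ t with hq_def
  -- q equals -(n-1) s tan
  have hqtan : ∀ t : ℝ, a₀ < t → t ≤ T → q t = -((n-1) * s * Real.tan (s*t)) := by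
    intro t h1 h2
    have hc := hcos t h1 h2
    have hρt := hρpos t h1 h2
    have hpow : Real.cos (s*t) ^ (n-1-1) = Real.cos (s*t) ^ (n-1) / Real.cos (s*t) := by
      rw [show n-1-1 = (n-1) - 1 from rfl, Real.rpow_sub hc, Real.rpow_one]
    rw [hq_def]
    simp only
    rw [hρ'_def]
    simp only
    rw [hpow, Real.tan_eq_sin_div_cos, hρ t]
    have hcne : Real.cos (s*t) ≠ 0 := hc.ne'
    have hρne : Real.cos (s*t) ^ (n-1) ≠ 0 := by
      rw [← hρ t]; exact hρt.ne'
    field_simp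
  -- second-order derivative of w
  have hw'' : ∀ a ∈ Set.Ico a₀ T, ∀ t : ℝ, a ≤ t → t ≤ T → a₀ < t →
      HasDerivAt (w' a) (-lam * w a t - q t * w' a t) t := by
    intro a ha t hat htT ha₀t
    have hc := hcos t ha₀t htT
    have hρt := hρpos t ha₀t htT
    have hnum := hode a ha t ⟨hat, htT⟩
    have hden := hρd t hc.ne'
    have hdiv := hnum.div hden hρt.ne'
    have hev : ∀ᶠ y in nhds t, 0 < Real.cos (s*y) := by
      have hcont : ContinuousAt (fun y : ℝ => Real.cos (s*y)) t := by
        exact (Real.continuous_cos.comp (continuous_const.mul continuous_id)).continuousAt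
      exact hcont (Ioi_mem_nhds hc)
    have heq : w' a =ᶠ[nhds t] (fun y => (ρ y * w' a y) / ρ y) := by
      filter_upwards [hev] with y hy
      have : ρ y ≠ 0 := by
        rw [hρ]; exact (Real.rpow_pos_of_pos hy _).ne'
      rw [mul_comm, mul_div_assoc, div_self this, mul_one]
    have := hdiv.congr_of_eventuallyEq heq
    refine this.congr_deriv ?_
    rw [hq_def]
    field_simp
  -- fix x
  obtain ⟨hxa₀, hxT⟩ := hx
  have ha₀Ico : a₀ ∈ Set.Ico a₀ T := ⟨le_refl _, hTa⟩
  -- bound on -q on (a₀, x]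
  set M : ℝ := max ((n-1) * s * Real.tan (s*x)) 0 with hM_def
  have hM0 : 0 ≤ M := le_max_right _ _
  have hqM : ∀ t : ℝ, a₀ < t → t ≤ x → -q t ≤ M := by
    intro t h1 h2
    rw [hqtan t h1 (h2.trans hxT), neg_neg]
    refine le_trans ?_ (le_max_left _ _)
    apply mul_le_mul_of_nonneg_left _ (mul_nonneg (by linarith) hs.le)
    rcases eq_or_lt_of_le h2 with h | h
    · rw [h]
    · exact (Real.tan_lt_tan_of_lt_of_lt_pi_div_two
        (by rw [← hsa₀]; exact mul_lt_mul_of_pos_left h1 hs)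
        (lt_of_le_of_lt (mul_le_mul_of_nonneg_left hxT hs.le) hsT)
        (mul_lt_mul_of_pos_left h hs)).le
  set K : ℝ := |1 - lam| + 2 * M with hK_def
  have hK0 : 0 ≤ K := by positivity
  -- step A : initial data convergence
  have hw0cont : Filter.Tendsto (fun a => w a₀ a) (nhdsWithin a₀ (Set.Ioi a₀)) (nhds (-1)) := by
    have h1 : ContinuousAt (w a₀) a₀ := (hder a₀ ha₀Ico a₀ ⟨le_refl _, hTa.le⟩).continuousAt
    have := h1.tendsto.mono_left (nhdsWithin_le_nhds (s := Set.Ioi a₀))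
    rwa [(hinit a₀ ha₀Ico).1] at this
  set m : ℝ := min x 0 with hm_def
  have ha₀m : a₀ < m := by
    apply lt_min hxa₀
    rw [ha₀_def]
    have : 0 < π / (2 * s) := by positivity
    linarith
  have hmT : m ≤ T := le_trans (min_le_left _ _) hxT
  obtain ⟨W, hW⟩ := isCompact_Icc.exists_bound_of_continuousOn
    (f := w a₀) (s := Set.Icc a₀ T)
    (fun t ht => ((hder a₀ ha₀Ico t ht).continuousAt.continuousWithinAt))
  have hW0 : 0 ≤ W := le_trans (norm_nonneg _) (hW a₀ ⟨le_refl _, hTa.le⟩)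
  have hkey : ∀ a ∈ Set.Ioc a₀ m, |w' a₀ a| ≤ |lam| * W * (a - a₀) := by
    rintro a ⟨ha1, ha2⟩
    have haT : a ≤ T := le_trans ha2 hmT
    have ha0 : a ≤ 0 := le_trans ha2 (min_le_right _ _)
    have hρa : 0 < ρ a := hρpos a ha1 haT
    have hcosnn : ∀ t ∈ Set.Icc a₀ a, 0 ≤ Real.cos (s*t) := by
      rintro t ⟨ht1, ht2⟩
      apply Real.cos_nonneg_of_mem_Icc
      constructor
      · rw [← hsa₀]; exact mul_le_mul_of_nonneg_left ht1 hs.le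
      · nlinarith [Real.pi_pos]
    have hcosmono : ∀ t ∈ Set.Icc a₀ a, Real.cos (s*t) ≤ Real.cos (s*a) := by
      rintro t ⟨ht1, ht2⟩
      have h1 : 0 ≤ -(s*a) := by nlinarith
      have h2 : -(s*t) ≤ π := by
        have h5 := mul_le_mul_of_nonneg_left ht1 hs.le
        rw [hsa₀] at h5
        linarith [Real.pi_pos]
      have h3 : -(s*a) ≤ -(s*t) := by nlinarith
      have := Real.cos_le_cos_of_nonneg_of_le_pi h1 h2 h3
      rwa [Real.cos_neg, Real.cos_neg] at this
    have hρmono : ∀ t ∈ Set.Icc a₀ a, ρ t ≤ ρ a := by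
      intro t ht
      rw [hρ, hρ]
      exact Real.rpow_le_rpow (hcosnn t ht) (hcosmono t ht) (by linarith)
    have hρnn : ∀ t ∈ Set.Icc a₀ a, 0 ≤ ρ t := by
      intro t ht
      rw [hρ]
      exact Real.rpow_nonneg (hcosnn t ht) _
    have hC : ∀ t ∈ Set.Icc a₀ a, HasDerivWithinAt (fun y => ρ y * w' a₀ y)
        (-(lam * ρ t * w a₀ t)) (Set.Icc a₀ a) t :=
      fun t ht => (hode a₀ ha₀Ico t ⟨ht.1, ht.2.trans haT⟩).hasDerivWithinAt
    have hbound : ∀ t ∈ Set.Icc a₀ a, ‖-(lam * ρ t * w a₀ t)‖ ≤ |lam| * ρ a * W := by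
      intro t ht
      have h1 : |w a₀ t| ≤ W := hW t ⟨ht.1, ht.2.trans haT⟩
      have h2 := hρmono t ht
      have h3 := hρnn t ht
      rw [Real.norm_eq_abs, abs_neg, abs_mul, abs_mul, abs_of_nonneg h3]
      have h4 : |lam| * ρ t ≤ |lam| * ρ a := mul_le_mul_of_nonneg_left h2 (abs_nonneg _)
      exact mul_le_mul h4 h1 (abs_nonneg _) (mul_nonneg (abs_nonneg _) (le_trans h3 h2))
    have hMVT := Convex.norm_image_sub_le_of_norm_hasDerivWithin_le hC hbound
      (convex_Icc a₀ a) (Set.left_mem_Icc.2 (le_of_lt ha1)) (Set.right_mem_Icc.2 (le_of_lt ha1))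
    have hv0 : ρ a₀ * w' a₀ a₀ = 0 := by rw [(hinit a₀ ha₀Ico).2, mul_zero]
    rw [hv0, sub_zero, Real.norm_eq_abs, Real.norm_eq_abs, abs_mul,
      abs_of_nonneg hρa.le, abs_of_nonneg (by linarith : (0:ℝ) ≤ a - a₀)] at hMVT
    have : ρ a * |w' a₀ a| ≤ ρ a * (|lam| * W * (a - a₀)) := by nlinarith
    exact le_of_mul_le_mul_left this hρa
  have hw0'cont : Filter.Tendsto (fun a => w' a₀ a) (nhdsWithin a₀ (Set.Ioi a₀)) (nhds 0) := by
    apply squeeze_zero_norm'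
    · filter_upwards [Ioc_mem_nhdsGT_of_mem (Set.mem_Ico.2 ⟨le_refl a₀, ha₀m⟩)] with a ha
      exact hkey a ha
    · have hc : Continuous fun a : ℝ => |lam| * W * (a - a₀) := by fun_prop
      have := (hc.tendsto a₀).mono_left (nhdsWithin_le_nhds (s := Set.Ioi a₀))
      simpa using this
  have hgron : ∀ a ∈ Set.Ioo a₀ m,
      (w a x - w a₀ x)^2 + (w' a x - w' a₀ x)^2 ≤
        ((-1 - w a₀ a)^2 + (w' a₀ a)^2) * Real.exp (K * (x - a)) := by
    rintro a ⟨ha1, ha2⟩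
    have hax : a < x := lt_of_lt_of_le ha2 (min_le_left _ _)
    have haT : a ≤ T := le_trans hax.le hxT
    have haIco : a ∈ Set.Ico a₀ T := ⟨ha1.le, lt_of_lt_of_le hax hxT⟩
    set u : ℝ → ℝ := fun t => w a t - w a₀ t with hu_def
    set u' : ℝ → ℝ := fun t => w' a t - w' a₀ t with hu'_def
    set F : ℝ → ℝ := fun t => (u t)^2 + (u' t)^2 with hF_def
    set F' : ℝ → ℝ := fun t => 2 * u t * u' t + 2 * u' t * (-lam * u t - q t * u' t)
      with hF'_def
    have hFd : ∀ t ∈ Set.Icc a x, HasDerivAt F (F' t) t := by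
      rintro t ⟨ht1, ht2⟩
      have htT : t ≤ T := ht2.trans hxT
      have ha₀t : a₀ < t := lt_of_lt_of_le ha1 ht1
      have hu : HasDerivAt u (u' t) t :=
        (hder a haIco t ⟨ht1, htT⟩).sub (hder a₀ ha₀Ico t ⟨ha₀t.le, htT⟩)
      have hu' : HasDerivAt u' (-lam * u t - q t * u' t) t := by
        have h1 := hw'' a haIco t ht1 htT ha₀t
        have h2 := hw'' a₀ ha₀Ico t ha₀t.le htT ha₀t
        have h3 := h1.sub h2
        refine h3.congr_deriv ?_
        simp only [hu_def, hu'_def]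
        ring
      have h4 := (hu.pow 2).add (hu'.pow 2)
      refine h4.congr_deriv ?_
      simp only [hF'_def]
      ring
    have hFc : ContinuousOn F (Set.Icc a x) :=
      fun t ht => (hFd t ht).continuousAt.continuousWithinAt
    have hbd : ∀ t ∈ Set.Ico a x, F' t ≤ K * F t + 0 := by
      rintro t ⟨ht1, ht2⟩
      have ha₀t : a₀ < t := lt_of_lt_of_le ha1 ht1
      have hqt : -q t ≤ M := hqM t ha₀t ht2.le
      simp only [hF'_def, hF_def, hK_def]
      have hA1 : (0:ℝ) ≤ (|1-lam| - (1-lam)) * (u t + u' t)^2 :=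
        mul_nonneg (by linarith [le_abs_self (1-lam)]) (sq_nonneg _)
      have hA2 : (0:ℝ) ≤ (|1-lam| + (1-lam)) * (u t - u' t)^2 :=
        mul_nonneg (by linarith [neg_abs_le (1-lam)]) (sq_nonneg _)
      have hq2 : -q t * (u' t)^2 ≤ M * (u' t)^2 :=
        mul_le_mul_of_nonneg_right hqt (sq_nonneg _)
      have hMu : (0:ℝ) ≤ M * (u t)^2 := mul_nonneg hM0 (sq_nonneg _)
      nlinarith [hA1, hA2, hq2, hMu]
    have hG := le_gronwallBound_of_liminf_deriv_right_le (K := K) (ε := 0) (δ := F a) hFc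
      (fun t ht r hr => ((hFd t ⟨ht.1, ht.2.le⟩).hasDerivWithinAt.liminf_right_slope_le hr))
      (le_refl (F a)) hbd x (Set.right_mem_Icc.2 hax.le)
    rw [gronwallBound_ε0] at hG
    have hFa : F a = (-1 - w a₀ a)^2 + (w' a₀ a)^2 := by
      simp only [hF_def, hu_def, hu'_def, (hinit a haIco).1, (hinit a haIco).2]
      ring
    rw [hFa] at hG
    exact hG
  -- conclusion
  have hmem : Set.Ioo a₀ m ∈ nhdsWithin a₀ (Set.Ioi a₀) :=
    Ioo_mem_nhdsGT_of_mem (Set.mem_Ico.2 ⟨le_refl _, ha₀m⟩)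
  have hB : Filter.Tendsto (fun a => ((-1 - w a₀ a)^2 + (w' a₀ a)^2) * Real.exp (K*(x-a₀)))
      (nhdsWithin a₀ (Set.Ioi a₀)) (nhds 0) := by
    have h1 : Filter.Tendsto (fun a => (-1 - w a₀ a)^2 + (w' a₀ a)^2)
        (nhdsWithin a₀ (Set.Ioi a₀)) (nhds 0) := by
      have h2 := (((tendsto_const_nhds (x := (-1:ℝ))
        (f := nhdsWithin a₀ (Set.Ioi a₀))).sub hw0cont).pow 2).add (hw0'cont.pow 2)
      simpa using h2
    simpa using h1.mul_const (Real.exp (K*(x-a₀)))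
  have hG0 : Filter.Tendsto (fun a => (w a x - w a₀ x)^2 + (w' a x - w' a₀ x)^2)
      (nhdsWithin a₀ (Set.Ioi a₀)) (nhds 0) := by
    apply squeeze_zero' (g := fun a => ((-1 - w a₀ a)^2 + (w' a₀ a)^2) * Real.exp (K*(x-a₀)))
    · filter_upwards with a; positivity
    · filter_upwards [hmem] with a ha
      refine (hgron a ha).trans ?_
      apply mul_le_mul_of_nonneg_left _ (by positivity)
      exact Real.exp_le_exp.2 (mul_le_mul_of_nonneg_left (by linarith [ha.1] : x - a ≤ x - a₀) hK0)
    · exact hB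
  have hext : ∀ f g : ℝ → ℝ,
      (∀ a, (f a)^2 ≤ (f a)^2 + (g a)^2) →
      Filter.Tendsto (fun a => (f a)^2 + (g a)^2) (nhdsWithin a₀ (Set.Ioi a₀)) (nhds 0) →
      Filter.Tendsto f (nhdsWithin a₀ (Set.Ioi a₀)) (nhds 0) := by
    intro f g hle hfg
    have h1 : Filter.Tendsto (fun a => (f a)^2) (nhdsWithin a₀ (Set.Ioi a₀)) (nhds 0) :=
      squeeze_zero' (Filter.Eventually.of_forall fun a => sq_nonneg _)
        (Filter.Eventually.of_forall hle) hfg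
    have h2 := (Real.continuous_sqrt.tendsto 0).comp h1
    rw [tendsto_zero_iff_abs_tendsto_zero]
    simpa [Function.comp_def, Real.sqrt_sq_eq_abs] using h2
  constructor
  · have h1 : Filter.Tendsto (fun a => w a x - w a₀ x)
        (nhdsWithin a₀ (Set.Ioi a₀)) (nhds 0) :=
      hext _ _ (fun a => le_add_of_nonneg_right (sq_nonneg _)) hG0
    have h2 := h1.add (tendsto_const_nhds (x := w a₀ x))
    simpa using h2
  · have h1 : Filter.Tendsto (fun a => w' a x - w' a₀ x)
        (nhdsWithin a₀ (Set.Ioi a₀)) (nhds 0) := by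
      refine hext (fun a => w' a x - w' a₀ x) (fun a => w a x - w a₀ x)
        (fun a => le_add_of_nonneg_right (sq_nonneg _)) ?_
      have := hG0
      convert this using 2 with a
      ring
    have h2 := h1.add (tendsto_const_nhds (x := w' a₀ x))
    simpa using h2
end
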